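/- Let R(F₄) = ℤ[ω₁,…,ω₄,y₃,y₄]/⟨g₂, g₄, r₃, r₆, r₈, r₁₂⟩, where g₂ = c₂ − 4ω₁², g₄ = 3y₄ + 2ω₁y₃ − c₄, r₃ = 2y₃ − ω₁³, r₆ = y₃² + 2c₆ − 3ω₁²y₄, r₈ = y₄(c₄ − 2ω₁y₃) − ω₁²c₆, r₁₂ = y₄³ − c₆². Then R(F₄) is generated, as a module over the subring generated by the images of ω₁,…,ω₄, by the images of 1, y₃, y₄ and y₄². -/

import Mathlib

open MvPolynomial

noncomputable section

/-- The polynomial ring ℤ[ω₁,…,ω₄,y₃,y₄]: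
    ωᵢ = X (i-1) for 1 ≤ i ≤ 4, y₃ = X 4, y₄ = X 5. -/
abbrev F4Poly : Type := MvPolynomial (Fin 6) ℤ

/-- t₁=ω₄, t₂=ω₃−ω₄, t₃=ω₂−ω₃, t₄=ω₁−ω₂+ω₃, t₅=ω₁−ω₃+ω₄, t₆=ω₁−ω₄. -/
def F4t : Fin 6 → F4Poly :=
  ![X 3, X 2 - X 3, X 1 - X 2, X 0 - X 1 + X 2, X 0 - X 2 + X 3, X 0 - X 3]

/-- c_r = e_r(t₁,…,t₆), the r-th elementary symmetric polynomial in t₁,…,t₆. -/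
def F4c (r : ℕ) : F4Poly :=
  (Finset.powersetCard r (Finset.univ : Finset (Fin 6))).sum fun s => s.prod F4t

/-- The ideal ⟨g₂, g₄, r₃, r₆, r₈, r₁₂⟩, with ω₁ = X 0, y₃ = X 4, y₄ = X 5. -/
def F4rels : Ideal F4Poly :=
  Ideal.span
    { F4c 2 - 4 * X 0 ^ 2,                             -- g₂
      3 * X 5 + 2 * X 0 * X 4 - F4c 4,                 -- g₄
      2 * X 4 - X 0 ^ 3,                               -- r₃
      X 4 ^ 2 + 2 * F4c 6 - 3 * X 0 ^ 2 * X 5,         -- r₆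
      X 5 * (F4c 4 - 2 * X 0 * X 4) - X 0 ^ 2 * F4c 6, -- r₈
      X 5 ^ 3 - (F4c 6) ^ 2 }                          -- r₁₂

/-- R(F₄) = ℤ[ω₁,…,ω₄,y₃,y₄]/⟨g₂,g₄,r₃,r₆,r₈,r₁₂⟩. -/
abbrev RF4 : Type := F4Poly ⧸ F4rels

-- auxiliary

lemma mk_g4 : Ideal.Quotient.mk F4rels (3 * X 5 + 2 * X 0 * X 4 - F4c 4) = 0 := by
  rw [Ideal.Quotient.eq_zero_iff_mem, F4rels]
  exact Ideal.subset_span (by simp)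

lemma mk_r3 : Ideal.Quotient.mk F4rels (2 * X 4 - X 0 ^ 3) = 0 := by
  rw [Ideal.Quotient.eq_zero_iff_mem, F4rels]
  exact Ideal.subset_span (by simp)

lemma mk_r6 : Ideal.Quotient.mk F4rels (X 4 ^ 2 + 2 * F4c 6 - 3 * X 0 ^ 2 * X 5) = 0 := by
  rw [Ideal.Quotient.eq_zero_iff_mem, F4rels]
  exact Ideal.subset_span (by simp)

lemma mk_r12 : Ideal.Quotient.mk F4rels (X 5 ^ 3 - (F4c 6) ^ 2) = 0 := by
  rw [Ideal.Quotient.eq_zero_iff_mem, F4rels]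
  exact Ideal.subset_span (by simp)

set_option maxHeartbeats 1000000 in
/-- Proposition 1 for G = F₄: R(F₄) is generated, as a module over the subring
    generated by the images of ω₁,…,ω₄, by the images of 1, y₃, y₄ and y₄². -/
theorem RF4_spanned_by_one_y3_y4_y4sq :
    Submodule.span
      (Algebra.adjoin ℤ
        (Set.range fun i : Fin 4 =>
          Ideal.Quotient.mk F4rels (X (Fin.castLE (by norm_num) i))))
      ({1, Ideal.Quotient.mk F4rels (X 4), Ideal.Quotient.mk F4rels (X 5),
        Ideal.Quotient.mk F4rels (X 5 ^ 2)} : Set RF4) = ⊤ := by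
  set A := Algebra.adjoin ℤ
      (Set.range fun i : Fin 4 =>
        Ideal.Quotient.mk F4rels (X (Fin.castLE (by norm_num) i))) with hA
  set mk := Ideal.Quotient.mk F4rels with hmk
  set y3 := mk (X 4) with hy3
  set y4 := mk (X 5) with hy4
  set w0 := mk (X 0) with hw0
  set c4 := mk (F4c 4) with hc4
  set c6 := mk (F4c 6) with hc6
  set S : Set RF4 := {1, y3, y4, mk (X 5 ^ 2)} with hS
  set N := Submodule.span A S with hN
  -- basic memberships in A
  have hwmem : ∀ i : Fin 4, mk (X (Fin.castLE (by norm_num) i)) ∈ A :=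
    fun i => Algebra.subset_adjoin ⟨i, rfl⟩
  have hw0A : w0 ∈ A := hwmem 0
  have hw1A : mk (X 1) ∈ A := hwmem 1
  have hw2A : mk (X 2) ∈ A := hwmem 2
  have hw3A : mk (X 3) ∈ A := hwmem 3
  have htA : ∀ j : Fin 6, mk (F4t j) ∈ A := by
    intro j
    fin_cases j <;>
      simp only [F4t, Matrix.cons_val_zero, Matrix.cons_val_one, Matrix.head_cons,
        Matrix.cons_val_two, Matrix.tail_cons, Matrix.cons_val_three, Matrix.cons_val_four,
        Matrix.cons_val_fin_one, map_sub, map_add] <;>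
      first
        | exact hw3A
        | exact sub_mem hw2A hw3A
        | exact sub_mem hw1A hw2A
        | exact add_mem (sub_mem hw0A hw1A) hw2A
        | exact add_mem (sub_mem hw0A hw2A) hw3A
        | exact sub_mem hw0A hw3A
  have hcA : ∀ r : ℕ, mk (F4c r) ∈ A := by
    intro r
    rw [F4c, map_sum]
    refine Subalgebra.sum_mem A fun s _ => ?_
    rw [map_prod]
    exact Subalgebra.prod_mem A fun j _ => htA j
  -- relations as equalities in RF4
  have h4 : 3 * y4 + 2 * w0 * y3 = c4 := by
    have := mk_g4
    simp only [map_sub, map_add, map_mul, map_ofNat, ← hmk, ← hy3, ← hy4, ← hw0, ← hc4] at this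
    linear_combination this
  have h3 : 2 * y3 = w0 ^ 3 := by
    have := mk_r3
    simp only [map_sub, map_mul, map_pow, map_ofNat, ← hmk, ← hy3, ← hw0] at this
    linear_combination this
  have h6 : y3 ^ 2 + 2 * c6 = 3 * w0 ^ 2 * y4 := by
    have := mk_r6
    simp only [map_sub, map_add, map_mul, map_pow, map_ofNat, ← hmk, ← hy3, ← hy4, ← hw0,
      ← hc6] at this
    linear_combination this
  have h12 : y4 ^ 3 = c6 ^ 2 := by
    have := mk_r12
    simp only [map_sub, map_pow, ← hmk, ← hy4, ← hc6] at this
    linear_combination this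
  have hX5sq : mk (X 5 ^ 2) = y4 ^ 2 := by rw [map_pow]
  -- membership helpers
  have memS : ∀ z ∈ S, z ∈ N := fun z hz => Submodule.subset_span hz
  have h1N : (1 : RF4) ∈ N := memS 1 (Or.inl rfl)
  have hy3N : y3 ∈ N := memS y3 (Or.inr (Or.inl rfl))
  have hy4N : y4 ∈ N := memS y4 (Or.inr (Or.inr (Or.inl rfl)))
  have hy42N : y4 ^ 2 ∈ N := by
    rw [← hX5sq]; exact memS _ (Or.inr (Or.inr (Or.inr rfl)))
  have hmulA : ∀ a : RF4, a ∈ A → ∀ m ∈ N, a * m ∈ N := by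
    intro a ha m hm
    have := N.smul_mem (⟨a, ha⟩ : A) hm
    simpa [Algebra.smul_def, Subalgebra.smul_def, smul_eq_mul] using this
  -- products of the generators of S
  have hprod : ∀ s ∈ S, ∀ t ∈ S, s * t ∈ N := by
    have e2 : y3 * y4 = (c4 - w0 ^ 4) * y3 - w0 ^ 3 * y4 := by
      linear_combination y3 * h4 - w0 * y3 * h3 - y4 * h3
    have e1 : y3 * y3 = 3 * w0 ^ 2 * y4 - 2 * c6 * 1 := by
      linear_combination h6
    have e3 : y3 * y4 ^ 2 =
        ((c4 - w0 ^ 4) * (c4 - w0 ^ 4)) * y3 - ((c4 - w0 ^ 4) * w0 ^ 3) * y4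
          - w0 ^ 3 * y4 ^ 2 := by
      linear_combination y4 * e2 + (c4 - w0 ^ 4) * e2
    have e5 : y4 * y4 ^ 2 = c6 ^ 2 * 1 := by linear_combination h12
    have e6 : y4 ^ 2 * y4 ^ 2 = (c6 ^ 2) * y4 := by linear_combination y4 * h12
    have hc4w : c4 - w0 ^ 4 ∈ A := sub_mem (hcA 4) (pow_mem hw0A 4)
    have h3A : (3 : RF4) ∈ A := by
      have := Subalgebra.natCast_mem A 3; simpa using this
    have h2A : (2 : RF4) ∈ A := by
      have := Subalgebra.natCast_mem A 2; simpa using this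
    have key : ∀ s t : RF4, (s = 1 ∨ s = y3 ∨ s = y4 ∨ s = y4 ^ 2) →
        (t = 1 ∨ t = y3 ∨ t = y4 ∨ t = y4 ^ 2) → s * t ∈ N := by
      have my33 : y3 * y3 ∈ N := by
        rw [e1]
        exact sub_mem (hmulA _ (mul_mem h3A (pow_mem hw0A 2)) _ hy4N)
          (hmulA _ (mul_mem h2A (hcA 6)) _ h1N)
      have my34 : y3 * y4 ∈ N := by
        rw [e2]
        exact sub_mem (hmulA _ hc4w _ hy3N) (hmulA _ (pow_mem hw0A 3) _ hy4N)
      have my342 : y3 * y4 ^ 2 ∈ N := by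
        rw [e3]
        exact sub_mem (sub_mem (hmulA _ (mul_mem hc4w hc4w) _ hy3N)
          (hmulA _ (mul_mem hc4w (pow_mem hw0A 3)) _ hy4N))
          (hmulA _ (pow_mem hw0A 3) _ hy42N)
      have my44 : y4 * y4 ∈ N := by rw [← sq]; exact hy42N
      have my442 : y4 * y4 ^ 2 ∈ N := by
        rw [e5]; exact hmulA _ (pow_mem (hcA 6) 2) _ h1N
      have my4242 : y4 ^ 2 * y4 ^ 2 ∈ N := by
        rw [e6]; exact hmulA _ (pow_mem (hcA 6) 2) _ hy4N
      rintro s t (rfl | rfl | rfl | rfl) (rfl | rfl | rfl | rfl)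
      · simpa using h1N
      · simpa using hy3N
      · simpa using hy4N
      · simpa using hy42N
      · simpa using hy3N
      · exact my33
      · exact my34
      · exact my342
      · simpa using hy4N
      · rw [mul_comm]; exact my34
      · exact my44
      · exact my442
      · simpa using hy42N
      · rw [mul_comm]; exact my342
      · rw [mul_comm]; exact my442
      · exact my4242
    intro s hs t ht
    apply key
    · rcases hs with h | h | h | h
      · exact Or.inl h
      · exact Or.inr (Or.inl h)
      · exact Or.inr (Or.inr (Or.inl h))
      · exact Or.inr (Or.inr (Or.inr (by rw [h, hX5sq])))
    · rcases ht with h | h | h | h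
      · exact Or.inl h
      · exact Or.inr (Or.inl h)
      · exact Or.inr (Or.inr (Or.inl h))
      · exact Or.inr (Or.inr (Or.inr (by rw [h, hX5sq])))
  -- N is closed under multiplication
  have hmulN : ∀ x ∈ N, ∀ y ∈ N, x * y ∈ N := by
    have step : ∀ s ∈ S, ∀ y ∈ N, s * y ∈ N := by
      intro s hs y hy
      refine Submodule.span_induction (p := fun y _ => s * y ∈ N) ?_ ?_ ?_ ?_ hy
      · exact fun t ht => hprod s hs t ht
      · simp only [mul_zero]; exact N.zero_mem
      · intro a b _ _ ha hb; rw [mul_add]; exact N.add_mem ha hb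
      · intro a x _ hx; rw [mul_smul_comm]; exact N.smul_mem a hx
    intro x hx y hy
    refine Submodule.span_induction (p := fun x _ => x * y ∈ N) ?_ ?_ ?_ ?_ hx
    · exact fun s hs => step s hs y hy
    · simp only [zero_mul]; exact N.zero_mem
    · intro a b _ _ ha hb; rw [add_mul]; exact N.add_mem ha hb
    · intro a x _ hx; rw [smul_mul_assoc]; exact N.smul_mem a hx
  -- every element of RF4 is in N
  rw [eq_top_iff]
  rintro x -
  have hadj : x ∈ Algebra.adjoin ℤ (Set.range fun i : Fin 6 => mk (X i)) := by
    have himg : (Set.range fun i : Fin 6 => mk (X i)) =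
        (Ideal.Quotient.mkₐ ℤ F4rels) '' (Set.range X) := by
      rw [← Set.range_comp]; rfl
    rw [himg, ← AlgHom.map_adjoin, MvPolynomial.adjoin_range_X]
    obtain ⟨p, rfl⟩ := Ideal.Quotient.mkₐ_surjective ℤ (I := F4rels) x
    exact Subalgebra.mem_map.mpr ⟨p, Algebra.mem_top, rfl⟩
  refine Algebra.adjoin_induction ?_ ?_ ?_ ?_ hadj
  · rintro _ ⟨i, rfl⟩
    fin_cases i
    · simpa using (show mk (X 0) * 1 ∈ N from hmulA _ hw0A 1 h1N)
    · simpa using (show mk (X 1) * 1 ∈ N from hmulA _ hw1A 1 h1N)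
    · simpa using (show mk (X 2) * 1 ∈ N from hmulA _ hw2A 1 h1N)
    · simpa using (show mk (X 3) * 1 ∈ N from hmulA _ hw3A 1 h1N)
    · exact hy3N
    · exact hy4N
  · intro r
    have : algebraMap ℤ RF4 r = r • (1 : RF4) := by simp [Algebra.smul_def]
    rw [this]
    exact N.toAddSubgroup.zsmul_mem h1N r
  · intro a b _ _ ha hb; exact N.add_mem ha hb
  · intro a b _ _ ha hb; exact hmulN a ha b hb
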